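/- Let (X,f) be a topological dynamical system on a compact metric space with the saturated property. Then for every continuous potential φ ∈ C(X), the rotation set R(φ; X, f) := {α ∈ ℝ : L(φ, α) ≠ ∅} equals {∫ φ dμ : μ ∈ M_f(X)}, and this set is a nonempty compact interval. -/

import Mathlib

open MeasureTheory Filter Set Topology ENNReal

set_option linter.unusedSectionVars false


namespace RotProof

variable {X : Type*} [MetricSpace X] [CompactSpace X]

/-- A positive normalized linear functional on `C(X, ℝ)`. -/
structure IsState (Λ : C(X, ℝ) → ℝ) : Prop where
  add : ∀ g h, Λ (g + h) = Λ g + Λ h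
  smul : ∀ (c : ℝ) (g), Λ (c • g) = c * Λ g
  pos : ∀ g : C(X, ℝ), (0 : C(X, ℝ)) ≤ g → 0 ≤ Λ g
  one : Λ 1 = 1

namespace IsState

variable {Λ : C(X, ℝ) → ℝ} (hΛ : IsState Λ)
include hΛ

theorem zero : Λ 0 = 0 := by
  have h := hΛ.smul 0 0
  simpa using h

theorem mono {g h : C(X, ℝ)} (hgh : g ≤ h) : Λ g ≤ Λ h := by
  have h1 : (0 : C(X, ℝ)) ≤ h - g := by
    rw [ContinuousMap.le_def] at hgh ⊢
    intro x
    simpa using hgh x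
  have h2 := hΛ.pos _ h1
  have h3 : Λ (g + (h - g)) = Λ g + Λ (h - g) := hΛ.add _ _
  have h4 : g + (h - g) = h := by ring
  rw [h4] at h3
  linarith

theorem sum {ι : Type*} (s : Finset ι) (g : ι → C(X, ℝ)) :
    Λ (∑ i ∈ s, g i) = ∑ i ∈ s, Λ (g i) := by
  classical
  induction s using Finset.induction_on with
  | empty => simpa using hΛ.zero
  | insert a s' h ih =>
                   rw [Finset.sum_insert h, hΛ.add, ih, Finset.sum_insert h]

theorem le_one {g : C(X, ℝ)} (hg : ∀ x, g x ≤ 1) : Λ g ≤ 1 := by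
  have : g ≤ 1 := by rw [ContinuousMap.le_def]; intro x; simpa using hg x
  simpa [hΛ.one] using hΛ.mono this

theorem abs_le_norm (g : C(X, ℝ)) : |Λ g| ≤ ‖g‖ := by
  have h1 : Λ g ≤ ‖g‖ := by
    have : g ≤ (‖g‖ : ℝ) • 1 := by
      rw [ContinuousMap.le_def]
      intro x
      have := g.norm_coe_le_norm x
      have h2 := le_abs_self (g x)
      simp only [ContinuousMap.smul_apply, ContinuousMap.one_apply, smul_eq_mul, mul_one]
      calc g x ≤ |g x| := h2
        _ = ‖g x‖ := rfl
        _ ≤ ‖g‖ := this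
    have := hΛ.mono this
    rwa [hΛ.smul, hΛ.one, mul_one] at this
  have h2 : -‖g‖ ≤ Λ g := by
    have : (-‖g‖ : ℝ) • 1 ≤ g := by
      rw [ContinuousMap.le_def]
      intro x
      have := g.norm_coe_le_norm x
      have h2 := neg_abs_le (g x)
      simp only [ContinuousMap.smul_apply, ContinuousMap.one_apply, smul_eq_mul, mul_one]
      calc (-‖g‖ : ℝ) ≤ -|g x| := by
            have : ‖g x‖ ≤ ‖g‖ := this
            simp only [Real.norm_eq_abs] at this
            linarith
        _ ≤ g x := h2
    have := hΛ.mono this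
    rwa [hΛ.smul, hΛ.one, mul_one] at this
  rw [abs_le]
  exact ⟨h2, h1⟩

end IsState

/-- Admissible test functions for an open set. -/
def Adm (U : Set X) (g : C(X, ℝ)) : Prop :=
  (∀ x, g x ∈ Icc (0 : ℝ) 1) ∧ tsupport g ⊆ U

theorem adm_zero (U : Set X) : Adm U (0 : C(X, ℝ)) := by
  constructor
  · intro x; simp [Icc]
  · have : tsupport ((0 : C(X, ℝ)) : X → ℝ) = ∅ := by
      simp [tsupport, Function.support]
    rw [this]; exact empty_subset _

instance admNonempty (U : Set X) : Nonempty {g : C(X, ℝ) // Adm U g} :=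
  ⟨⟨0, adm_zero U⟩⟩

/-- The "inner content" of a set given a positive functional. -/
noncomputable def nu (Λ : C(X, ℝ) → ℝ) (U : Set X) : ℝ≥0∞ :=
  ⨆ g : {g : C(X, ℝ) // Adm U g}, ENNReal.ofReal (Λ g.1)

theorem nu_le_one {Λ : C(X, ℝ) → ℝ} (hΛ : IsState Λ) (U : Set X) : nu Λ U ≤ 1 := by
  refine iSup_le fun g => ?_
  have := hΛ.le_one (fun x => (g.2.1 x).2)
  calc ENNReal.ofReal (Λ g.1) ≤ ENNReal.ofReal 1 := ENNReal.ofReal_le_ofReal this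
    _ = 1 := ENNReal.ofReal_one

theorem nu_ne_top {Λ : C(X, ℝ) → ℝ} (hΛ : IsState Λ) (U : Set X) : nu Λ U ≠ ⊤ :=
  fun h => by simpa [h] using nu_le_one hΛ U

theorem le_nu {Λ : C(X, ℝ) → ℝ} {U : Set X} {g : C(X, ℝ)} (hg : Adm U g) :
    ENNReal.ofReal (Λ g) ≤ nu Λ U :=
  le_iSup (fun g : {g : C(X, ℝ) // Adm U g} => ENNReal.ofReal (Λ g.1)) ⟨g, hg⟩

theorem nu_mono {Λ : C(X, ℝ) → ℝ} {U V : Set X} (h : U ⊆ V) : nu Λ U ≤ nu Λ V :=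
  iSup_le fun g => le_nu ⟨g.2.1, g.2.2.trans h⟩

open Classical in
/-- The pre-measure function used for the outer measure construction. -/
noncomputable def mfun (Λ : C(X, ℝ) → ℝ) (A : Set X) : ℝ≥0∞ :=
  if IsOpen A then nu Λ A else ⊤

theorem mfun_empty {Λ : C(X, ℝ) → ℝ} (hΛ : IsState Λ) : mfun Λ (∅ : Set X) = 0 := by
  classical
  rw [mfun]
  rw [if_pos isOpen_empty]
  refine le_antisymm (iSup_le fun g => ?_) zero_le
  have hg0 : g.1 = 0 := by
    ext x
    by_contra hx
    have : x ∈ tsupport g.1 := subset_closure (by simpa [Function.mem_support] using hx)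
    exact absurd (g.2.2 this) (notMem_empty x)
  rw [hg0, hΛ.zero]
  simp


theorem mfun_open {Λ : C(X, ℝ) → ℝ} {U : Set X} (hU : IsOpen U) : mfun Λ U = nu Λ U := by
  classical
  rw [mfun, if_pos hU]

/-- Countable subadditivity of `nu` over open covers, via partitions of unity. -/
theorem nu_subadd {Λ : C(X, ℝ) → ℝ} (hΛ : IsState Λ) {U : Set X} (T : ℕ → Set X)
    (hcov : U ⊆ ⋃ n, T n) : nu Λ U ≤ ∑' n, mfun Λ (T n) := by
  classical
  by_cases hop : ∀ n, IsOpen (T n)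
  swap
  · push_neg at hop
    obtain ⟨n, hn⟩ := hop
    have h1 : (⊤ : ℝ≥0∞) ≤ ∑' n, mfun Λ (T n) := by
      have := ENNReal.le_tsum (f := fun n => mfun Λ (T n)) n
      rw [mfun, if_neg hn] at this
      exact this
    exact le_top.trans h1
  refine iSup_le fun g => ?_
  obtain ⟨g, hg01, hgsupp⟩ := g
  have hKcov : tsupport g ⊆ ⋃ n, T n := hgsupp.trans hcov
  obtain ⟨ρ, hρ⟩ := PartitionOfUnity.exists_isSubordinate (isClosed_tsupport (g : X → ℝ)) T hop hKcov
  have hfin : {i : ℕ | (Function.support (ρ i : X → ℝ)).Nonempty}.Finite :=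
    ρ.locallyFinite.finite_nonempty_of_compact
  set t : Finset ℕ := hfin.toFinset with ht
  have hzero : ∀ i ∉ t, ∀ x : X, (ρ i) x = 0 := by
    intro i hi x
    by_contra hx
    exact hi (hfin.mem_toFinset.2 ⟨x, hx⟩)
  have hg_eq : g = ∑ i ∈ t, (ρ i : C(X, ℝ)) * g := by
    ext x
    by_cases hx : x ∈ tsupport (g : X → ℝ)
    · have h1 : ∑ᶠ i, (ρ i) x = 1 := ρ.sum_eq_one hx
      have h2 : (Function.support fun i => (ρ i) x) ⊆ (t : Set ℕ) := by
        intro i hi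
        simp only [Function.mem_support] at hi
        exact hfin.mem_toFinset.2 ⟨x, hi⟩
      rw [finsum_eq_sum_of_support_subset _ h2] at h1
      simp only [ContinuousMap.coe_sum, Finset.sum_apply, ContinuousMap.mul_apply]
      rw [← Finset.sum_mul, h1, one_mul]
    · have h0 : g x = 0 := image_eq_zero_of_notMem_tsupport hx
      simp only [ContinuousMap.coe_sum, Finset.sum_apply, ContinuousMap.mul_apply, h0, mul_zero,
        Finset.sum_const_zero]
  have hterm_nonneg : ∀ i, 0 ≤ Λ ((ρ i : C(X, ℝ)) * g) := by
    intro i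
    refine hΛ.pos _ ?_
    rw [ContinuousMap.le_def]
    intro x
    simpa using mul_nonneg (ρ.nonneg i x) (hg01 x).1
  calc ENNReal.ofReal (Λ g) = ENNReal.ofReal (∑ i ∈ t, Λ ((ρ i : C(X, ℝ)) * g)) := by
        rw [← hΛ.sum]; rw [← hg_eq]
    _ = ∑ i ∈ t, ENNReal.ofReal (Λ ((ρ i : C(X, ℝ)) * g)) :=
        ENNReal.ofReal_sum_of_nonneg (fun i _ => hterm_nonneg i)
    _ ≤ ∑ i ∈ t, mfun Λ (T i) := by
        refine Finset.sum_le_sum fun i _ => ?_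
        rw [mfun_open (hop i)]
        refine le_nu ⟨fun x => ⟨?_, ?_⟩, ?_⟩
        · simpa using mul_nonneg (ρ.nonneg i x) (hg01 x).1
        · simpa using mul_le_one₀ (ρ.le_one i x) (hg01 x).1 (hg01 x).2
        · have h1 : tsupport ((ρ i : C(X, ℝ)) * g : C(X, ℝ)) ⊆ tsupport (ρ i : X → ℝ) := by
            exact
              tsupport_mul_subset_left (f := (ρ i : X → ℝ)) (g := (g : X → ℝ))
          exact h1.trans (hρ i)
    _ ≤ ∑' n, mfun Λ (T n) := ENNReal.sum_le_tsum t

/-- The outer measure associated with a state. -/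
noncomputable def outerOf {Λ : C(X, ℝ) → ℝ} (hΛ : IsState Λ) : OuterMeasure X :=
  OuterMeasure.ofFunction (mfun Λ) (mfun_empty hΛ)

theorem outerOf_open {Λ : C(X, ℝ) → ℝ} (hΛ : IsState Λ) {U : Set X} (hU : IsOpen U) :
    outerOf hΛ U = nu Λ U := by
  refine le_antisymm ?_ ?_
  · have := OuterMeasure.ofFunction_le (m := mfun Λ) (m_empty := mfun_empty hΛ) U
    rwa [mfun_open hU] at this
  · rw [outerOf, OuterMeasure.ofFunction_apply]
    exact le_iInf₂ fun T hT => nu_subadd hΛ T hT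

theorem outerOf_le_one {Λ : C(X, ℝ) → ℝ} (hΛ : IsState Λ) (s : Set X) : outerOf hΛ s ≤ 1 := by
  calc outerOf hΛ s ≤ outerOf hΛ univ := (outerOf hΛ).mono (subset_univ s)
    _ = nu Λ univ := outerOf_open hΛ isOpen_univ
    _ ≤ 1 := nu_le_one hΛ univ

theorem outerOf_univ {Λ : C(X, ℝ) → ℝ} (hΛ : IsState Λ) : outerOf hΛ univ = 1 := by
  refine le_antisymm (outerOf_le_one hΛ univ) ?_
  rw [outerOf_open hΛ isOpen_univ]
  have hadm : Adm (univ : Set X) (1 : C(X, ℝ)) := by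
    constructor
    · intro x; simp
    · exact subset_univ _
  have := le_nu (Λ := Λ) hadm
  rwa [hΛ.one, ENNReal.ofReal_one] at this

/-- `outerOf` is a metric outer measure. -/
theorem outerOf_isMetric {Λ : C(X, ℝ) → ℝ} (hΛ : IsState Λ) : (outerOf hΛ).IsMetric := by
  intro s t hst
  refine le_antisymm (measure_union_le s t) ?_
  obtain ⟨r, hr0, hr⟩ := hst
  set r' : ℝ≥0∞ := min r 1 with hr'
  have hr'0 : r' ≠ 0 := by
    simp only [hr', ne_eq, min_eq_iff]
    intro h
    rcases h with ⟨h1, -⟩ | ⟨h1, -⟩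
    · exact hr0 h1
    · exact one_ne_zero h1
  have hr'sep : ∀ x ∈ s, ∀ y ∈ t, r' ≤ edist x y := fun x hx y hy =>
    le_trans (min_le_left _ _) (hr x hx y hy)
  set S' : Set X := {x | EMetric.infEdist x s < r' / 2} with hS'
  set T' : Set X := {x | EMetric.infEdist x t < r' / 2} with hT'
  have hS'open : IsOpen S' := EMetric.continuous_infEdist.isOpen_preimage _ isOpen_Iio
  have hT'open : IsOpen T' := EMetric.continuous_infEdist.isOpen_preimage _ isOpen_Iio
  have hsS' : s ⊆ S' := by
    intro x hx
    have : EMetric.infEdist x s = 0 := EMetric.infEdist_zero_of_mem hx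
    simp only [hS', mem_setOf_eq, this]
    exact ENNReal.div_pos hr'0 (by simp [hr'])
  have htT' : t ⊆ T' := by
    intro x hx
    have : EMetric.infEdist x t = 0 := EMetric.infEdist_zero_of_mem hx
    simp only [hT', mem_setOf_eq, this]
    exact ENNReal.div_pos hr'0 (by simp [hr'])
  have hdisj : Disjoint S' T' := by
    rw [Set.disjoint_left]
    intro x hxS hxT
    obtain ⟨y, hy, hxy⟩ := EMetric.infEdist_lt_iff.1 hxS
    obtain ⟨z, hz, hxz⟩ := EMetric.infEdist_lt_iff.1 hxT
    have h1 : edist y z ≤ edist y x + edist x z := edist_triangle y x z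
    have h2 : edist y x + edist x z < r' / 2 + r' / 2 := by
      refine ENNReal.add_lt_add ?_ hxz
      rwa [edist_comm]
    rw [ENNReal.add_halves] at h2
    exact absurd (hr'sep y hy z hz) (not_le.2 (h1.trans_lt h2))
  -- now prove superadditivity
  rw [outerOf, OuterMeasure.ofFunction_apply]
  refine le_iInf₂ fun T hT => ?_
  by_cases hop : ∀ n, IsOpen (T n)
  swap
  · push_neg at hop
    obtain ⟨n, hn⟩ := hop
    have h1 : (⊤ : ℝ≥0∞) ≤ ∑' n, mfun Λ (T n) := by
      have := ENNReal.le_tsum (f := fun n => mfun Λ (T n)) n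
      rw [mfun, if_neg hn] at this
      exact this
    exact le_top.trans h1
  have hsub : ∀ n, mfun Λ (T n ∩ S') + mfun Λ (T n ∩ T') ≤ mfun Λ (T n) := by
    intro n
    rw [mfun_open ((hop n).inter hS'open), mfun_open ((hop n).inter hT'open),
      mfun_open (hop n)]
    rw [nu, nu]
    refine ENNReal.iSup_add_iSup_le fun f g => ?_
    obtain ⟨f, hf01, hfsupp⟩ := f
    obtain ⟨g, hg01, hgsupp⟩ := g
    have hdisjfg : Disjoint (tsupport (f : X → ℝ)) (tsupport (g : X → ℝ)) :=
      Set.disjoint_of_subset (hfsupp.trans (inter_subset_right)) (hgsupp.trans (inter_subset_right)) hdisj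
    have hΛfg : Λ (f + g) = Λ f + Λ g := hΛ.add f g
    have hadm : Adm (T n) (f + g) := by
      refine ⟨fun x => ⟨?_, ?_⟩, ?_⟩
      · simpa using add_nonneg (hf01 x).1 (hg01 x).1
      · by_cases hx : x ∈ tsupport (f : X → ℝ)
        · have hgx : g x = 0 :=
            image_eq_zero_of_notMem_tsupport (Set.disjoint_left.1 hdisjfg hx)
          simpa [hgx] using (hf01 x).2
        · have hfx : f x = 0 := image_eq_zero_of_notMem_tsupport hx
          simpa [hfx] using (hg01 x).2
      · have h1 : tsupport ((f + g : C(X, ℝ)) : X → ℝ) ⊆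
            tsupport (f : X → ℝ) ∪ tsupport (g : X → ℝ) := by
          exact
            tsupport_add (f := (f : X → ℝ)) (g := (g : X → ℝ))
        refine h1.trans (union_subset (hfsupp.trans inter_subset_left)
          (hgsupp.trans inter_subset_left))
    have h3 := le_nu (Λ := Λ) hadm
    rw [hΛfg] at h3
    calc ENNReal.ofReal (Λ f) + ENNReal.ofReal (Λ g)
        = ENNReal.ofReal (Λ f + Λ g) := by
          rw [ENNReal.ofReal_add (hΛ.pos f ?_) (hΛ.pos g ?_)]
          · rw [ContinuousMap.le_def]; intro x; simpa using (hf01 x).1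
          · rw [ContinuousMap.le_def]; intro x; simpa using (hg01 x).1
      _ ≤ nu Λ (T n) := h3
  calc outerOf hΛ s + outerOf hΛ t
      ≤ (∑' n, mfun Λ (T n ∩ S')) + ∑' n, mfun Λ (T n ∩ T') := by
        refine add_le_add ?_ ?_
        · rw [outerOf, OuterMeasure.ofFunction_apply]
          refine iInf₂_le_of_le (fun n => T n ∩ S') ?_ le_rfl
          intro x hx
          obtain ⟨n, hn⟩ := mem_iUnion.1 (hT (Or.inl hx : x ∈ s ∪ t))
          exact mem_iUnion.2 ⟨n, hn, hsS' hx⟩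
        · rw [outerOf, OuterMeasure.ofFunction_apply]
          refine iInf₂_le_of_le (fun n => T n ∩ T') ?_ le_rfl
          intro x hx
          obtain ⟨n, hn⟩ := mem_iUnion.1 (hT (Or.inr hx : x ∈ s ∪ t))
          exact mem_iUnion.2 ⟨n, hn, htT' hx⟩
    _ = ∑' n, (mfun Λ (T n ∩ S') + mfun Λ (T n ∩ T')) := (ENNReal.tsum_add).symm
    _ ≤ ∑' n, mfun Λ (T n) := ENNReal.tsum_le_tsum hsub

section Meas

variable [MeasurableSpace X] [BorelSpace X]

/-- The Borel measure associated with a state. -/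
noncomputable def measureOf {Λ : C(X, ℝ) → ℝ} (hΛ : IsState Λ) : Measure X :=
  (outerOf hΛ).toMeasure (by
    rw [BorelSpace.measurable_eq (α := X)]
    exact (outerOf_isMetric hΛ).borel_le_caratheodory)

theorem measureOf_apply {Λ : C(X, ℝ) → ℝ} (hΛ : IsState Λ) {s : Set X}
    (hs : MeasurableSet s) : measureOf hΛ s = outerOf hΛ s :=
  toMeasure_apply _ _ hs

instance measureOf_prob {Λ : C(X, ℝ) → ℝ} (hΛ : IsState Λ) :
    IsProbabilityMeasure (measureOf hΛ) :=
  ⟨by rw [measureOf_apply hΛ MeasurableSet.univ, outerOf_univ hΛ]⟩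

theorem measureOf_le_one {Λ : C(X, ℝ) → ℝ} (hΛ : IsState Λ) (s : Set X) :
    measureOf hΛ s ≤ 1 := by
  have := measureOf_prob hΛ
  calc measureOf hΛ s ≤ measureOf hΛ univ := measure_mono (subset_univ s)
    _ = 1 := measure_univ

theorem measureOf_open {Λ : C(X, ℝ) → ℝ} (hΛ : IsState Λ) {U : Set X} (hU : IsOpen U) :
    measureOf hΛ U = nu Λ U := by
  rw [measureOf_apply hΛ hU.measurableSet, outerOf_open hΛ hU]

/-- Outer regularity of the Riesz measure. -/
theorem measureOf_outerReg {Λ : C(X, ℝ) → ℝ} (hΛ : IsState Λ) {E : Set X}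
    (hE : MeasurableSet E) {ε : ℝ≥0∞} (hε : ε ≠ 0) :
    ∃ U : Set X, IsOpen U ∧ E ⊆ U ∧ measureOf hΛ U ≤ measureOf hΛ E + ε := by
  have hfin : outerOf hΛ E ≠ ⊤ := fun h => by
    simpa [h] using outerOf_le_one hΛ E
  have hlt : outerOf hΛ E < outerOf hΛ E + ε := ENNReal.lt_add_right hfin hε
  have h1 : outerOf hΛ E = ⨅ (t : ℕ → Set X) (_ : E ⊆ ⋃ n, t n), ∑' n, mfun Λ (t n) :=
    OuterMeasure.ofFunction_apply _ _ _
  rw [h1] at hlt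
  obtain ⟨T, hT⟩ := iInf_lt_iff.1 hlt
  obtain ⟨hTcov, hTsum⟩ := iInf_lt_iff.1 hT
  have hop : ∀ n, IsOpen (T n) := by
    intro n
    by_contra hn
    have h2 : (⊤ : ℝ≥0∞) ≤ ∑' n, mfun Λ (T n) := by
      have := ENNReal.le_tsum (f := fun n => mfun Λ (T n)) n
      rw [mfun, if_neg hn] at this
      exact this
    rw [top_le_iff.1 h2] at hTsum
    exact absurd hTsum (not_lt.2 le_top)
  refine ⟨⋃ n, T n, isOpen_iUnion hop, hTcov, ?_⟩
  rw [measureOf_open hΛ (isOpen_iUnion hop), measureOf_apply hΛ hE]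
  exact (nu_subadd hΛ T subset_rfl).trans hTsum.le

theorem integrable_cm {Λ : C(X, ℝ) → ℝ} (hΛ : IsState Λ) (g : C(X, ℝ)) :
    Integrable (fun x => g x) (measureOf hΛ) := by
  refine g.continuous.integrable_of_hasCompactSupport ?_
  exact (isClosed_tsupport _).isCompact

/-- Main estimate of the Riesz representation theorem. -/
theorem le_integral {Λ : C(X, ℝ) → ℝ} (hΛ : IsState Λ) (g : C(X, ℝ)) :
    Λ g ≤ ∫ x, g x ∂(measureOf hΛ) := by
  classical
  set μ := measureOf hΛ with hμdef
  have hμprob : IsProbabilityMeasure μ := measureOf_prob hΛ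
  have hint : Integrable (fun x => g x) μ := integrable_cm hΛ g
  set b := ‖g‖ with hb
  have hb0 : 0 ≤ b := norm_nonneg g
  set a := -b - 1 with ha
  have main : ∀ n : ℕ, 0 < n → ∀ ε : ℝ, 0 < ε → ε ≤ 1 →
      Λ g ≤ (∫ x, g x ∂μ) + (2*b+2)/n + ε * (1 + n*(2*b+3)) := by
    intro n hn ε hε hε1
    set δ := (2*b+2)/n with hδ
    have hδpos : 0 < δ := by positivity
    have hnδ : (n : ℝ) * δ = 2*b+2 := by
      rw [hδ]; field_simp
    set E : Fin n → Set X := fun i =>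
      (g : X → ℝ) ⁻¹' Ioc (a + (i : ℕ) * δ) (a + ((i : ℕ)+1) * δ) with hE
    have hEmeas : ∀ i, MeasurableSet (E i) :=
      fun i => g.continuous.measurable measurableSet_Ioc
    have hEdisj : Pairwise (Function.onFun Disjoint E) := by
      have key : ∀ i j : Fin n, (i : ℕ) < (j : ℕ) → Disjoint (E i) (E j) := by
        intro i j hij
        refine Disjoint.preimage _ ?_
        rw [Set.Ioc_disjoint_Ioc]
        have h1 : ((i : ℕ) : ℝ) + 1 ≤ (j : ℕ) := by exact_mod_cast hij
        refine le_trans (min_le_left _ _) (le_trans ?_ (le_max_right _ _))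
        have : ((i : ℕ) + 1 : ℝ) * δ ≤ ((j : ℕ) : ℝ) * δ :=
          mul_le_mul_of_nonneg_right h1 hδpos.le
        linarith
      intro i j hij
      rcases lt_or_gt_of_ne (fun h => hij (Fin.ext h) : (i : ℕ) ≠ (j : ℕ)) with h | h
      · exact key i j h
      · exact (key j i h).symm
    have hEcov : (⋃ i, E i) = univ := by
      refine eq_univ_iff_forall.2 fun x => ?_
      have hgx1 : -b ≤ g x := by
        have := g.norm_coe_le_norm x
        rw [Real.norm_eq_abs] at this
        linarith [abs_le.1 this |>.1]
      have hgx2 : g x ≤ b := by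
        have := g.norm_coe_le_norm x
        rw [Real.norm_eq_abs] at this
        linarith [abs_le.1 this |>.2]
      have h1 : 0 < (g x - a)/δ := by
        apply div_pos ?_ hδpos
        simp only [ha]; linarith
      have h2 : (g x - a)/δ ≤ n := by
        rw [div_le_iff₀ hδpos, hnδ, ha]; linarith
      set k := ⌈(g x - a)/δ⌉ with hk
      have hk1 : 1 ≤ k := by
        rw [hk]; exact Int.ceil_pos.2 h1
      have hkn : k ≤ n := by
        rw [hk]; exact Int.ceil_le.2 (by exact_mod_cast h2)
      have hktn : k.toNat ≤ n := by omega
      have hkt1 : 1 ≤ k.toNat := by omega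
      refine mem_iUnion.2 ⟨⟨k.toNat - 1, by omega⟩, ?_⟩
      have hkr : ((k.toNat : ℕ) : ℝ) = (k : ℝ) := by
        exact_mod_cast congrArg (Int.cast : ℤ → ℝ) (Int.toNat_of_nonneg (by omega : (0:ℤ) ≤ k))
      have hcast : ((k.toNat - 1 : ℕ) : ℝ) = (k : ℝ) - 1 := by
        push_cast [Nat.cast_sub hkt1]
        rw [hkr]
      simp only [hE, mem_preimage, mem_Ioc, Fin.val_mk]
      constructor
      · have h3 : ((k : ℝ) - 1) < (g x - a)/δ := by
          have := Int.ceil_lt_add_one (R := ℝ) ((g x - a)/δ)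
          rw [← hk] at this
          linarith
        have h4 : ((k : ℝ) - 1) * δ < g x - a := by
          rw [← lt_div_iff₀ hδpos] at *
          exact h3
        rw [hcast]
        linarith
      · have h3 : (g x - a)/δ ≤ (k : ℝ) := Int.le_ceil _
        have h4 : g x - a ≤ (k : ℝ) * δ := by
          rw [div_le_iff₀ hδpos] at h3
          exact h3
        rw [hcast]
        linarith
    -- outer regular open sets
    have hreg : ∀ i : Fin n, ∃ V : Set X, IsOpen V ∧ E i ⊆ V ∧
        μ V ≤ μ (E i) + ENNReal.ofReal ε :=
      fun i => measureOf_outerReg hΛ (hEmeas i) (ENNReal.ofReal_pos.2 hε).ne'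
    choose V hVopen hEV hVle using hreg
    set U : Fin n → Set X := fun i =>
      V i ∩ (g : X → ℝ) ⁻¹' Iio (a + ((i : ℕ)+1) * δ + ε) with hU
    have hUopen : ∀ i, IsOpen (U i) :=
      fun i => (hVopen i).inter (isOpen_Iio.preimage g.continuous)
    have hUcov : (univ : Set X) ⊆ ⋃ i, U i := by
      intro x _
      obtain ⟨i, hi⟩ := mem_iUnion.1 (hEcov ▸ mem_univ x)
      refine mem_iUnion.2 ⟨i, hEV i hi, ?_⟩
      simp only [hE, mem_preimage, mem_Ioc] at hi
      simp only [mem_preimage, mem_Iio]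
      linarith [hi.2]
    obtain ⟨ρ, hρ⟩ := PartitionOfUnity.exists_isSubordinate isClosed_univ U hUopen hUcov
    have hsum1 : ∀ x : X, ∑ i : Fin n, (ρ i) x = 1 := by
      intro x
      have := ρ.sum_eq_one (mem_univ x)
      rwa [finsum_eq_sum_of_fintype] at this
    have hgdecomp : g = ∑ i : Fin n, (ρ i : C(X, ℝ)) * g := by
      ext x
      simp only [ContinuousMap.coe_sum, Finset.sum_apply, ContinuousMap.mul_apply]
      rw [← Finset.sum_mul, hsum1, one_mul]
    set c : Fin n → ℝ := fun i => a + ((i : ℕ)+1) * δ + ε with hc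
    have hstep1 : ∀ i, Λ ((ρ i : C(X, ℝ)) * g) ≤ c i * Λ (ρ i) := by
      intro i
      have hposdiff : (0 : C(X, ℝ)) ≤ c i • (ρ i : C(X, ℝ)) - (ρ i : C(X, ℝ)) * g := by
        rw [ContinuousMap.le_def]
        intro x
        simp only [ContinuousMap.zero_apply, ContinuousMap.sub_apply,
          ContinuousMap.smul_apply, ContinuousMap.mul_apply, smul_eq_mul]
        by_cases hx : (ρ i) x = 0
        · simp [hx]
        · have hxU : x ∈ U i := (hρ i) (subset_closure (Function.mem_support.2 hx))
          have hgx : g x < c i := by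
            simp only [hU, mem_inter_iff, mem_preimage, mem_Iio] at hxU
            simpa [hc] using hxU.2
          have hρx : 0 ≤ (ρ i) x := ρ.nonneg i x
          nlinarith
      have h1 := hΛ.pos _ hposdiff
      have h2 : c i • (ρ i : C(X, ℝ)) - (ρ i : C(X, ℝ)) * g + (ρ i : C(X, ℝ)) * g
          = c i • (ρ i : C(X, ℝ)) := by ring
      have h3 := hΛ.add (c i • (ρ i : C(X, ℝ)) - (ρ i : C(X, ℝ)) * g) ((ρ i : C(X, ℝ)) * g)
      rw [h2, hΛ.smul] at h3
      linarith
    have hρpos : ∀ i, 0 ≤ Λ (ρ i) := by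
      intro i
      refine hΛ.pos _ ?_
      rw [ContinuousMap.le_def]
      intro x
      simpa using ρ.nonneg i x
    have hρle : ∀ i, Λ (ρ i) ≤ (μ (E i)).toReal + ε := by
      intro i
      have hadm : Adm (U i) (ρ i) := ⟨fun x => ⟨ρ.nonneg i x, ρ.le_one i x⟩, hρ i⟩
      have h1 : ENNReal.ofReal (Λ (ρ i)) ≤ μ (U i) := by
        rw [hμdef, measureOf_open hΛ (hUopen i)]
        exact le_nu hadm
      have h2 : μ (U i) ≤ μ (E i) + ENNReal.ofReal ε :=
        le_trans (measure_mono inter_subset_left) (hVle i)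
      have h3 : μ (E i) + ENNReal.ofReal ε ≠ ⊤ :=
        ENNReal.add_ne_top.2 ⟨measure_ne_top μ _, ENNReal.ofReal_ne_top⟩
      have h4 := ENNReal.toReal_mono h3 (h1.trans h2)
      rw [ENNReal.toReal_ofReal (hρpos i)] at h4
      rwa [ENNReal.toReal_add (measure_ne_top μ _) ENNReal.ofReal_ne_top,
        ENNReal.toReal_ofReal hε.le] at h4
    have hρsum : ∑ i : Fin n, Λ (ρ i) = 1 := by
      have h1 : (∑ i : Fin n, (ρ i : C(X, ℝ))) = (1 : C(X, ℝ)) := by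
        ext x
        simp only [ContinuousMap.coe_sum, Finset.sum_apply, ContinuousMap.one_apply]
        exact hsum1 x
      rw [← hΛ.sum, h1, hΛ.one]
    set mE : Fin n → ℝ := fun i => (μ (E i)).toReal with hmE
    have hmE0 : ∀ i, 0 ≤ mE i := fun i => ENNReal.toReal_nonneg
    have hmEsum : ∑ i : Fin n, mE i = 1 := by
      have h1 : μ (⋃ i, E i) = ∑' i, μ (E i) := measure_iUnion hEdisj hEmeas
      rw [hEcov, measure_univ, tsum_fintype] at h1
      have h2 := congrArg ENNReal.toReal h1
      rw [ENNReal.toReal_one, ENNReal.toReal_sum (fun i _ => measure_ne_top μ _)] at h2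
      exact h2.symm
    set d : Fin n → ℝ := fun i => a + ((i : ℕ)+1) * δ with hd
    have hdi : ∀ i, d i * mE i ≤ ∫ x in E i, (g x + δ) ∂μ := by
      intro i
      have h1 : ∫ x in E i, d i ∂μ = mE i * d i := by
        rw [setIntegral_const, smul_eq_mul, Measure.real, hmE]
      have h2 : ∫ x in E i, d i ∂μ ≤ ∫ x in E i, (g x + δ) ∂μ := by
        refine setIntegral_mono_on (integrable_const _).integrableOn
          ((hint.add (integrable_const δ)).integrableOn) (hEmeas i) ?_
        intro x hx
        simp only [hE, mem_preimage, mem_Ioc] at hx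
        simp only [hd]
        have := hx.1
        linarith
      rw [h1] at h2
      linarith [h2]
    have hsumint : ∑ i : Fin n, ∫ x in E i, (g x + δ) ∂μ = (∫ x, g x ∂μ) + δ := by
      have h1 := integral_iUnion hEmeas hEdisj
        (f := fun x => g x + δ) (μ := μ)
        (by rw [hEcov]; exact (hint.add (integrable_const δ)).integrableOn)
      rw [hEcov] at h1
      rw [setIntegral_univ] at h1
      rw [tsum_fintype] at h1
      rw [integral_add hint (integrable_const δ), integral_const, probReal_univ,
        one_smul] at h1
      exact h1.symm
    -- assemble the chain of inequalities
    have hA : Λ g ≤ ∑ i : Fin n, c i * Λ (ρ i) := by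
      calc Λ g = ∑ i : Fin n, Λ ((ρ i : C(X, ℝ)) * g) := by
            rw [← hΛ.sum, ← hgdecomp]
        _ ≤ ∑ i : Fin n, c i * Λ (ρ i) := Finset.sum_le_sum fun i _ => hstep1 i
    have hcoef : ∀ i : Fin n, 0 ≤ c i + (b+1) := by
      intro i
      have : c i + (b+1) = ((i : ℕ)+1) * δ + ε := by rw [hc, ha]; ring
      rw [this]
      positivity
    have hB : ∑ i : Fin n, c i * Λ (ρ i)
        = ∑ i : Fin n, (c i + (b+1)) * Λ (ρ i) - (b+1) := by
      have : ∑ i : Fin n, (c i + (b+1)) * Λ (ρ i)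
          = ∑ i : Fin n, c i * Λ (ρ i) + (b+1) * ∑ i : Fin n, Λ (ρ i) := by
        rw [Finset.mul_sum, ← Finset.sum_add_distrib]
        congr 1
        ext i
        ring
      rw [this, hρsum]
      ring
    have hC : ∑ i : Fin n, (c i + (b+1)) * Λ (ρ i)
        ≤ ∑ i : Fin n, (c i + (b+1)) * (mE i + ε) :=
      Finset.sum_le_sum fun i _ => mul_le_mul_of_nonneg_left (hρle i) (hcoef i)
    have hD : ∑ i : Fin n, (c i + (b+1)) * (mE i + ε)
        = ∑ i : Fin n, (c i + (b+1)) * mE i + ε * ∑ i : Fin n, (c i + (b+1)) := by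
      rw [Finset.mul_sum, ← Finset.sum_add_distrib]
      congr 1
      ext i
      ring
    have hE2 : ∑ i : Fin n, (c i + (b+1)) ≤ n * (2*b+3) := by
      have hterm : ∀ i : Fin n, c i + (b+1) ≤ 2*b+3 := by
        intro i
        have h1 : c i + (b+1) = ((i : ℕ)+1) * δ + ε := by rw [hc, ha]; ring
        have h2 : ((i : ℕ) : ℝ) + 1 ≤ n := by
          have := i.2
          exact_mod_cast Nat.succ_le_of_lt this
        have h3 : (((i : ℕ) : ℝ)+1) * δ ≤ (n : ℝ) * δ :=
          mul_le_mul_of_nonneg_right h2 hδpos.le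
        rw [h1]
        rw [hnδ] at h3
        linarith
      calc ∑ i : Fin n, (c i + (b+1)) ≤ ∑ _i : Fin n, (2*b+3) :=
            Finset.sum_le_sum fun i _ => hterm i
        _ = n * (2*b+3) := by simp [Finset.sum_const, Finset.card_univ]; ring
    have hF : ∑ i : Fin n, (c i + (b+1)) * mE i
        = ∑ i : Fin n, d i * mE i + ε + (b+1) := by
      have h1 : ∀ i : Fin n, (c i + (b+1)) * mE i = d i * mE i + ε * mE i + (b+1) * mE i := by
        intro i
        have : c i = d i + ε := by rw [hc, hd]
        rw [this]
        ring
      rw [Finset.sum_congr rfl (fun i _ => h1 i), Finset.sum_add_distrib,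
        Finset.sum_add_distrib, ← Finset.mul_sum, ← Finset.mul_sum, hmEsum]
      ring
    have hG : ∑ i : Fin n, d i * mE i ≤ (∫ x, g x ∂μ) + δ := by
      calc ∑ i : Fin n, d i * mE i ≤ ∑ i : Fin n, ∫ x in E i, (g x + δ) ∂μ :=
            Finset.sum_le_sum fun i _ => hdi i
        _ = (∫ x, g x ∂μ) + δ := hsumint
    have hεK : ε * ∑ i : Fin n, (c i + (b+1)) ≤ ε * (n * (2*b+3)) :=
      mul_le_mul_of_nonneg_left hE2 hε.le
    have hδeq : δ = (2*b+2)/n := hδ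
    nlinarith [hA, hB, hC, hD, hF, hG, hεK]
  -- Step B: remove ε
  have stepB : ∀ n : ℕ, 0 < n → Λ g ≤ (∫ x, g x ∂μ) + (2*b+2)/n := by
    intro n hn
    have hK : (0:ℝ) < 1 + n*(2*b+3) := by positivity
    refine le_of_forall_pos_le_add fun ε' hε' => ?_
    set ε := min 1 (ε' / (1 + n*(2*b+3))) with hεdef
    have hεpos : 0 < ε := lt_min one_pos (by positivity)
    have hε1 : ε ≤ 1 := min_le_left _ _
    have h1 := main n hn ε hεpos hε1
    have h2 : ε * (1 + n*(2*b+3)) ≤ ε' := by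
      have h3 : ε ≤ ε' / (1 + n*(2*b+3)) := min_le_right _ _
      calc ε * (1 + n*(2*b+3)) ≤ (ε' / (1 + n*(2*b+3))) * (1 + n*(2*b+3)) :=
            mul_le_mul_of_nonneg_right h3 hK.le
        _ = ε' := by field_simp
    linarith
  -- Step A: let n → ∞
  refine le_of_forall_pos_le_add fun ε hε => ?_
  obtain ⟨n, hn⟩ := exists_nat_gt ((2*b+2)/ε)
  have hnpos : 0 < n := by
    by_contra h
    push_neg at h
    interval_cases n
    simp only [Nat.cast_zero] at hn
    have : 0 < (2*b+2)/ε := by positivity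
    linarith
  have h1 := stepB n hnpos
  have h2 : (2*b+2)/n < ε := by
    rw [div_lt_iff₀ (by exact_mod_cast hnpos : (0:ℝ) < n)]
    rw [div_lt_iff₀ hε] at hn
    linarith
  linarith

/-- The Riesz representation: the state is integration against `measureOf`. -/
theorem integral_eq {Λ : C(X, ℝ) → ℝ} (hΛ : IsState Λ) (g : C(X, ℝ)) :
    Λ g = ∫ x, g x ∂(measureOf hΛ) := by
  refine le_antisymm (le_integral hΛ g) ?_
  have h1 := le_integral hΛ (-g)
  have h2 : Λ (-g) = -Λ g := by
    have h3 := hΛ.smul (-1) g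
    simpa using h3
  rw [h2] at h1
  have h4 : ∫ x, (-g : C(X, ℝ)) x ∂(measureOf hΛ) = -∫ x, g x ∂(measureOf hΛ) := by
    simp only [ContinuousMap.neg_apply]
    exact integral_neg _
  rw [h4] at h1
  linarith

end Meas

section Cluster

theorem isState_closed : IsClosed {Λ : C(X, ℝ) → ℝ | IsState Λ} := by
  have h1 : {Λ : C(X, ℝ) → ℝ | IsState Λ} =
      (⋂ (g : C(X, ℝ)) (h : C(X, ℝ)), {Λ | Λ (g + h) = Λ g + Λ h}) ∩
      ((⋂ (c : ℝ) (g : C(X, ℝ)), {Λ | Λ (c • g) = c * Λ g}) ∩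
      ((⋂ (g : C(X, ℝ)) (_ : (0 : C(X, ℝ)) ≤ g), {Λ | 0 ≤ Λ g}) ∩
      {Λ | Λ 1 = 1})) := by
    ext Λ
    simp only [mem_setOf_eq, mem_inter_iff, mem_iInter]
    constructor
    · rintro ⟨a, b, c, d⟩
      exact ⟨a, b, c, d⟩
    · rintro ⟨a, b, c, d⟩
      exact ⟨a, b, c, d⟩
  rw [h1]
  refine IsClosed.inter ?_ (IsClosed.inter ?_ (IsClosed.inter ?_ ?_))
  · exact isClosed_iInter fun g => isClosed_iInter fun h =>
      isClosed_eq (continuous_apply (g + h)) ((continuous_apply g).add (continuous_apply h))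
  · exact isClosed_iInter fun c => isClosed_iInter fun g =>
      isClosed_eq (continuous_apply (c • g)) (continuous_const.mul (continuous_apply g))
  · exact isClosed_iInter fun g => isClosed_iInter fun _ =>
      isClosed_le continuous_const (continuous_apply g)
  · exact isClosed_eq (continuous_apply _) continuous_const

theorem isState_compact : IsCompact {Λ : C(X, ℝ) → ℝ | IsState Λ} := by
  have hsub : {Λ : C(X, ℝ) → ℝ | IsState Λ} ⊆
      Set.pi univ (fun g : C(X, ℝ) => Icc (-‖g‖) ‖g‖) := by
    intro Λ hΛ g _
    have := hΛ.abs_le_norm g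
    rw [abs_le] at this
    exact ⟨this.1, this.2⟩
  exact (isCompact_univ_pi fun g => isCompact_Icc).of_isClosed_subset isState_closed hsub

theorem mapClusterPt_eq_of_tendsto {u : ℕ → ℝ} {y l : ℝ}
    (hy : MapClusterPt y atTop u) (hl : Tendsto u atTop (nhds l)) : y = l := by
  have h1 : Filter.map u atTop ≤ nhds l := hl
  have h2 : (nhds y ⊓ Filter.map u atTop).NeBot := hy
  have h3 : (nhds y ⊓ Filter.map u atTop) ≤ nhds y ⊓ nhds l :=
    inf_le_inf_left _ h1
  exact eq_of_nhds_neBot (h2.mono h3)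

variable [MeasurableSpace X] [BorelSpace X]

/-- Cluster-point construction of invariant measures from approximately
invariant sequences of states. -/
theorem exists_invariant_of_seq (f : X → X) (hf : Continuous f)
    (L : ℕ → (C(X, ℝ) → ℝ))
    (hL : ∀ᶠ n in atTop, IsState (L n))
    (hinv : ∀ g : C(X, ℝ),
      Tendsto (fun n => L n (g.comp ⟨f, hf⟩) - L n g) atTop (nhds 0)) :
    ∃ μ : Measure X, IsProbabilityMeasure μ ∧ μ.map f = μ ∧
      ∀ g : C(X, ℝ), MapClusterPt (∫ x, g x ∂μ) atTop (fun n => L n g) := by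
  set S := {Λ : C(X, ℝ) → ℝ | IsState Λ} with hS
  have hFle : Filter.map L atTop ≤ Filter.principal S :=
    Filter.le_principal_iff.2 hL
  obtain ⟨Λ, hΛS, hclus⟩ := isState_compact.exists_clusterPt hFle
  have hmap : ∀ T : ((C(X, ℝ) → ℝ) → ℝ), Continuous T →
      MapClusterPt (T Λ) atTop (fun n => T (L n)) := by
    intro T hT
    have h1 : Tendsto T (Filter.map L atTop) (Filter.map (fun n => T (L n)) atTop) :=
      (Filter.map_map).le
    exact hclus.map hT.continuousAt h1
  have heval : ∀ g : C(X, ℝ), MapClusterPt (Λ g) atTop (fun n => L n g) :=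
    fun g => hmap (fun Λ' => Λ' g) (continuous_apply g)
  have hΛinv : ∀ g : C(X, ℝ), Λ (g.comp ⟨f, hf⟩) = Λ g := by
    intro g
    have h1 : MapClusterPt (Λ (g.comp ⟨f, hf⟩) - Λ g) atTop
        (fun n => L n (g.comp ⟨f, hf⟩) - L n g) :=
      hmap (fun Λ' => Λ' (g.comp ⟨f, hf⟩) - Λ' g)
        ((continuous_apply _).sub (continuous_apply _))
    have h2 := mapClusterPt_eq_of_tendsto h1 (hinv g)
    linarith [h2]
  have hΛstate : IsState Λ := hΛS
  refine ⟨measureOf hΛstate, measureOf_prob hΛstate, ?_, ?_⟩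
  · -- invariance of the measure
    have hmap_prob : IsProbabilityMeasure ((measureOf hΛstate).map f) :=
      Measure.isProbabilityMeasure_map hf.measurable.aemeasurable
    have hgint : ∀ g : C(X, ℝ),
        ∫ x, g x ∂((measureOf hΛstate).map f) = ∫ x, g x ∂(measureOf hΛstate) := by
      intro g
      rw [integral_map hf.measurable.aemeasurable g.continuous.aestronglyMeasurable]
      have h1 : ∫ x, g (f x) ∂(measureOf hΛstate)
          = ∫ x, (g.comp ⟨f, hf⟩) x ∂(measureOf hΛstate) := rfl
      rw [h1, ← integral_eq hΛstate, ← integral_eq hΛstate, hΛinv]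
    refine ext_of_forall_lintegral_eq_of_IsFiniteMeasure ?_
    intro F
    have hFfin : ∀ ν : Measure X, IsProbabilityMeasure ν → ∫⁻ x, (F x : ℝ≥0∞) ∂ν ≠ ⊤ := by
      intro ν hν
      exact (F.lintegral_lt_top_of_nnreal ν).ne
    have hG : ∀ ν : Measure X, IsProbabilityMeasure ν →
        (∫⁻ x, (F x : ℝ≥0∞) ∂ν).toReal = ∫ x, ((F x : ℝ) : ℝ) ∂ν := by
      intro ν hν
      exact F.toReal_lintegral_coe_eq_integral ν
    have h4 : ∫ x, ((F x : ℝ) : ℝ) ∂((measureOf hΛstate).map f)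
        = ∫ x, ((F x : ℝ) : ℝ) ∂(measureOf hΛstate) := by
      have hGc : Continuous fun x => ((F x : ℝ) : ℝ) :=
        NNReal.continuous_coe.comp F.continuous
      exact hgint ⟨fun x => ((F x : ℝ) : ℝ), hGc⟩
    rw [← hG _ hmap_prob, ← hG _ (measureOf_prob hΛstate)] at h4
    exact (ENNReal.toReal_eq_toReal_iff' (hFfin _ hmap_prob)
      (hFfin _ (measureOf_prob hΛstate))).1 h4
  · intro g
    rw [← integral_eq hΛstate]
    exact heval g

end Cluster

section Applications

variable [MeasurableSpace X] [BorelSpace X]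

/-- Empirical averages are eventually states. -/
theorem empirical_isState (f : X → X) (x : X) {n : ℕ} (hn : 0 < n) :
    IsState (fun g : C(X, ℝ) => (n : ℝ)⁻¹ * ∑ k ∈ Finset.range n, g (f^[k] x)) := by
  constructor
  · intro g h
    simp only [ContinuousMap.add_apply, Finset.sum_add_distrib, mul_add]
  · intro c g
    simp only [ContinuousMap.smul_apply, smul_eq_mul, ← Finset.mul_sum]
    ring
  · intro g hg
    refine mul_nonneg (by positivity) (Finset.sum_nonneg fun k _ => ?_)
    have := (ContinuousMap.le_def.1 hg) (f^[k] x)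
    simpa using this
  · simp only [ContinuousMap.one_apply, Finset.sum_const, Finset.card_range,
      nsmul_eq_mul, mul_one]
    field_simp

theorem empirical_almost_invariant (f : X → X) (hf : Continuous f) (x : X) (g : C(X, ℝ)) :
    Tendsto (fun n : ℕ =>
      ((n : ℝ)⁻¹ * ∑ k ∈ Finset.range n, (g.comp ⟨f, hf⟩) (f^[k] x)) -
      ((n : ℝ)⁻¹ * ∑ k ∈ Finset.range n, g (f^[k] x))) atTop (nhds 0) := by
  have hdiff : ∀ n : ℕ,
      ((n : ℝ)⁻¹ * ∑ k ∈ Finset.range n, (g.comp ⟨f, hf⟩) (f^[k] x)) -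
      ((n : ℝ)⁻¹ * ∑ k ∈ Finset.range n, g (f^[k] x))
      = (n : ℝ)⁻¹ * (g (f^[n] x) - g x) := by
    intro n
    have h1 : ∀ k, (g.comp ⟨f, hf⟩) (f^[k] x) = g (f^[k+1] x) := by
      intro k
      simp [ContinuousMap.comp_apply, Function.iterate_succ_apply']
    rw [← mul_sub]
    congr 1
    rw [Finset.sum_congr rfl (fun k _ => h1 k), ← Finset.sum_sub_distrib]
    have := Finset.sum_range_sub (f := fun k => g (f^[k] x)) n
    simpa using this
  simp only [hdiff]
  have hbnd : ∀ n : ℕ, ‖(n : ℝ)⁻¹ * (g (f^[n] x) - g x)‖ ≤ (n : ℝ)⁻¹ * (2 * ‖g‖) := by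
    intro n
    rw [norm_mul]
    have h1 : ‖g (f^[n] x) - g x‖ ≤ 2 * ‖g‖ := by
      calc ‖g (f^[n] x) - g x‖ ≤ ‖g (f^[n] x)‖ + ‖g x‖ := norm_sub_le _ _
        _ ≤ ‖g‖ + ‖g‖ := add_le_add (g.norm_coe_le_norm _) (g.norm_coe_le_norm _)
        _ = 2 * ‖g‖ := by ring
    have h2 : ‖((n : ℝ))⁻¹‖ = (n : ℝ)⁻¹ := by
      rw [Real.norm_eq_abs, abs_of_nonneg (by positivity)]
    rw [h2]
    exact mul_le_mul_of_nonneg_left h1 (by positivity)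
  have h2 : Tendsto (fun n : ℕ => (n : ℝ)⁻¹ * (2 * ‖g‖)) atTop (nhds 0) := by
    have h3 := (tendsto_inv_atTop_nhds_zero_nat : Tendsto (fun n : ℕ => (n : ℝ)⁻¹) atTop (nhds 0)).mul_const (2 * ‖g‖)
    rwa [zero_mul] at h3
  exact squeeze_zero_norm hbnd h2

/-- From a point, produce an invariant probability measure whose integrals
cluster the empirical averages. -/
theorem exists_invariant_of_point (f : X → X) (hf : Continuous f) (x : X) :
    ∃ μ : Measure X, IsProbabilityMeasure μ ∧ μ.map f = μ ∧
      ∀ g : C(X, ℝ), MapClusterPt (∫ y, g y ∂μ) atTop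
        (fun n : ℕ => (n : ℝ)⁻¹ * ∑ k ∈ Finset.range n, g (f^[k] x)) := by
  refine exists_invariant_of_seq f hf
    (fun n => fun g : C(X, ℝ) => (n : ℝ)⁻¹ * ∑ k ∈ Finset.range n, g (f^[k] x))
    ?_ (fun g => empirical_almost_invariant f hf x g)
  exact eventually_atTop.2 ⟨1, fun n hn => empirical_isState f x hn⟩

/-- From a sequence of invariant measures, produce an invariant measure whose
integrals cluster the integrals. -/
theorem exists_invariant_of_measures (f : X → X) (hf : Continuous f)
    (ν : ℕ → Measure X) (hνp : ∀ n, IsProbabilityMeasure (ν n))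
    (hνi : ∀ n, (ν n).map f = ν n) :
    ∃ μ : Measure X, IsProbabilityMeasure μ ∧ μ.map f = μ ∧
      ∀ g : C(X, ℝ), MapClusterPt (∫ y, g y ∂μ) atTop
        (fun n : ℕ => ∫ y, g y ∂(ν n)) := by
  have hint : ∀ (n : ℕ) (g : C(X, ℝ)), Integrable (fun y => g y) (ν n) := by
    intro n g
    have := hνp n
    exact g.continuous.integrable_of_hasCompactSupport (isClosed_tsupport _).isCompact
  refine exists_invariant_of_seq f hf (fun n => fun g : C(X, ℝ) => ∫ y, g y ∂(ν n)) ?_ ?_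
  · refine Eventually.of_forall fun n => ?_
    have := hνp n
    constructor
    · intro g h
      simp only [ContinuousMap.add_apply]
      exact integral_add (hint n g) (hint n h)
    · intro c g
      simp only [ContinuousMap.smul_apply, smul_eq_mul]
      rw [integral_const_mul]
    · intro g hg
      exact integral_nonneg fun y => by simpa using (ContinuousMap.le_def.1 hg) y
    · simp [measure_univ]
  · intro g
    have hzero : ∀ n : ℕ, (∫ y, (g.comp ⟨f, hf⟩) y ∂(ν n)) - ∫ y, g y ∂(ν n) = 0 := by
      intro n
      have := hνp n
      have h1 : ∫ y, (g.comp ⟨f, hf⟩) y ∂(ν n) = ∫ y, g (f y) ∂(ν n) := rfl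
      have h2 : ∫ y, g y ∂((ν n).map f) = ∫ y, g (f y) ∂(ν n) :=
        integral_map hf.measurable.aemeasurable g.continuous.aestronglyMeasurable
      rw [h1, ← h2, hνi n, sub_self]
    simp only [hzero]
    exact tendsto_const_nhds

end Applications

end RotProof

open RotProof in
/-- For a topological dynamical system `(X,f)` on a compact metric
space with the saturated property (for every invariant probability measure
`μ`, the generic set `G_μ` is nonempty and its topological entropy equals
`h_μ(f)`), the rotation set `R(φ) = {α : L(φ,α) ≠ ∅}` of every continuous
potential `φ` equals `{∫ φ dμ : μ invariant}` and is a nonempty compact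
interval. Here `htop` is the (Bowen) topological entropy of subsets and
`hent` is the metric entropy of measures. -/
theorem rotation_set_eq_integrals_and_Icc
    {X : Type*} [MetricSpace X] [CompactSpace X] [Nonempty X]
    [MeasurableSpace X] [BorelSpace X]
    (f : X → X) (hf : Continuous f)
    (φ : X → ℝ) (hφ : Continuous φ)
    (htop : Set X → ℝ) (hent : Measure X → ℝ)
    (M : Set (Measure X))
    (hM : M = {μ : Measure X | IsProbabilityMeasure μ ∧ μ.map f = μ})
    (hsat : ∀ μ ∈ M,
      ({x : X | ∀ g : X → ℝ, Continuous g →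
          Tendsto (fun n : ℕ => (n : ℝ)⁻¹ * ∑ k ∈ Finset.range n, g (f^[k] x))
            atTop (nhds (∫ y, g y ∂μ))}).Nonempty ∧
        htop {x : X | ∀ g : X → ℝ, Continuous g →
          Tendsto (fun n : ℕ => (n : ℝ)⁻¹ * ∑ k ∈ Finset.range n, g (f^[k] x))
            atTop (nhds (∫ y, g y ∂μ))} = hent μ) :
    {α : ℝ | ∃ x : X,
        Tendsto (fun n : ℕ => (n : ℝ)⁻¹ * ∑ k ∈ Finset.range n, φ (f^[k] x))
          atTop (nhds α)}
      = {α : ℝ | ∃ μ ∈ M, ∫ y, φ y ∂μ = α} ∧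
    ∃ a b : ℝ, a ≤ b ∧
      {α : ℝ | ∃ x : X,
          Tendsto (fun n : ℕ => (n : ℝ)⁻¹ * ∑ k ∈ Finset.range n, φ (f^[k] x))
            atTop (nhds α)} = Set.Icc a b := by
  classical
  set φc : C(X, ℝ) := ⟨φ, hφ⟩ with hφcdef
  set R := {α : ℝ | ∃ x : X,
      Tendsto (fun n : ℕ => (n : ℝ)⁻¹ * ∑ k ∈ Finset.range n, φ (f^[k] x))
        atTop (nhds α)} with hRdef
  set S := {α : ℝ | ∃ μ ∈ M, ∫ y, φ y ∂μ = α} with hSdef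
  have hint : ∀ μ : Measure X, IsProbabilityMeasure μ → Integrable φ μ := fun μ hμ =>
    hφ.integrable_of_hasCompactSupport (isClosed_tsupport φ).isCompact
  -- R ⊆ S
  have hRS : R ⊆ S := by
    rintro α ⟨x, hx⟩
    obtain ⟨μ, hp, hm, hc⟩ := exists_invariant_of_point f hf x
    refine ⟨μ, by rw [hM]; exact ⟨hp, hm⟩, ?_⟩
    exact mapClusterPt_eq_of_tendsto (hc φc) hx
  -- S ⊆ R
  have hSR : S ⊆ R := by
    rintro α ⟨μ, hμ, hi⟩
    obtain ⟨x, hx⟩ := (hsat μ hμ).1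
    exact ⟨x, by rw [← hi]; exact hx φ hφ⟩
  have hReqS : R = S := Set.Subset.antisymm hRS hSR
  -- S nonempty
  have hSne : S.Nonempty := by
    obtain ⟨μ, hp, hm, _⟩ := exists_invariant_of_point f hf (Classical.arbitrary X)
    exact ⟨∫ y, φ y ∂μ, μ, by rw [hM]; exact ⟨hp, hm⟩, rfl⟩
  -- bounds
  have hbound : ∀ α ∈ S, |α| ≤ ‖φc‖ := by
    rintro α ⟨μ, hμ, rfl⟩
    have hμ' := hμ
    rw [hM] at hμ'
    haveI := hμ'.1
    have h1 := norm_integral_le_of_norm_le_const (μ := μ) (C := ‖φc‖) (f := φ)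
      (Eventually.of_forall fun y => φc.norm_coe_le_norm y)
    rwa [probReal_univ, mul_one, Real.norm_eq_abs] at h1
  have hbddA : BddAbove S := ⟨‖φc‖, fun α hα => (abs_le.1 (hbound α hα)).2⟩
  have hbddB : BddBelow S := ⟨-‖φc‖, fun α hα => (abs_le.1 (hbound α hα)).1⟩
  -- sup and inf attained
  have hsupmem : sSup S ∈ S := by
    obtain ⟨u, hu_mono, hu_tend, hu_mem⟩ := exists_seq_tendsto_sSup hSne hbddA
    have hch : ∀ n : ℕ, ∃ μ : Measure X,
        (IsProbabilityMeasure μ ∧ μ.map f = μ) ∧ ∫ y, φ y ∂μ = u n := by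
      intro n
      obtain ⟨μ, hμ, hi⟩ := hu_mem n
      rw [hM] at hμ
      exact ⟨μ, hμ, hi⟩
    choose ν hν hνint using hch
    obtain ⟨μ', hp, hm, hc⟩ := exists_invariant_of_measures f hf ν
      (fun n => (hν n).1) (fun n => (hν n).2)
    have h2 : Tendsto (fun n : ℕ => ∫ y, φc y ∂(ν n)) atTop (nhds (sSup S)) := by
      have h3 : (fun n : ℕ => ∫ y, φc y ∂(ν n)) = u := funext hνint
      rw [h3]
      exact hu_tend
    have h4 := mapClusterPt_eq_of_tendsto (hc φc) h2
    exact ⟨μ', by rw [hM]; exact ⟨hp, hm⟩, h4⟩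
  have hinfmem : sInf S ∈ S := by
    obtain ⟨u, hu_mono, hu_tend, hu_mem⟩ := exists_seq_tendsto_sInf hSne hbddB
    have hch : ∀ n : ℕ, ∃ μ : Measure X,
        (IsProbabilityMeasure μ ∧ μ.map f = μ) ∧ ∫ y, φ y ∂μ = u n := by
      intro n
      obtain ⟨μ, hμ, hi⟩ := hu_mem n
      rw [hM] at hμ
      exact ⟨μ, hμ, hi⟩
    choose ν hν hνint using hch
    obtain ⟨μ', hp, hm, hc⟩ := exists_invariant_of_measures f hf ν
      (fun n => (hν n).1) (fun n => (hν n).2)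
    have h2 : Tendsto (fun n : ℕ => ∫ y, φc y ∂(ν n)) atTop (nhds (sInf S)) := by
      have h3 : (fun n : ℕ => ∫ y, φc y ∂(ν n)) = u := funext hνint
      rw [h3]
      exact hu_tend
    have h4 := mapClusterPt_eq_of_tendsto (hc φc) h2
    exact ⟨μ', by rw [hM]; exact ⟨hp, hm⟩, h4⟩
  -- convexity: everything in between is attained
  have hcombo : ∀ γ : ℝ, sInf S ≤ γ → γ ≤ sSup S → γ ∈ S := by
    intro γ h1 h2
    rcases eq_or_lt_of_le (h1.trans h2) with heq | hlt
    · have : γ = sInf S := le_antisymm (h2.trans heq.symm.le) h1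
      rw [this]
      exact hinfmem
    · obtain ⟨μa, hμaM, hμaint⟩ := hinfmem
      obtain ⟨μb, hμbM, hμbint⟩ := hsupmem
      have hμa' := hμaM; rw [hM] at hμa'
      have hμb' := hμbM; rw [hM] at hμb'
      haveI := hμa'.1
      haveI := hμb'.1
      set t : ℝ := (γ - sInf S) / (sSup S - sInf S) with htdef
      have hst : sSup S - sInf S ≠ 0 := sub_ne_zero.2 hlt.ne'
      have ht0 : 0 ≤ t := div_nonneg (by linarith) (by linarith)
      have ht1 : t ≤ 1 := by
        rw [htdef, div_le_one (by linarith)]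
        linarith
      set κ : Measure X := ENNReal.ofReal (1 - t) • μa + ENNReal.ofReal t • μb with hκdef
      have hκp : IsProbabilityMeasure κ := by
        constructor
        rw [hκdef]
        simp only [Measure.coe_add, Pi.add_apply, Measure.smul_apply, smul_eq_mul,
          measure_univ, mul_one]
        rw [← ENNReal.ofReal_add (by linarith) ht0]
        norm_num
      have hκm : κ.map f = κ := by
        rw [hκdef, Measure.map_add _ _ hf.measurable, Measure.map_smul, Measure.map_smul,
          hμa'.2, hμb'.2]
      have hκint : ∫ y, φ y ∂κ = (1 - t) * sInf S + t * sSup S := by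
        rw [hκdef, integral_add_measure
          ((hint μa hμa'.1).smul_measure ENNReal.ofReal_ne_top)
          ((hint μb hμb'.1).smul_measure ENNReal.ofReal_ne_top),
          integral_smul_measure, integral_smul_measure,
          ENNReal.toReal_ofReal (by linarith : (0:ℝ) ≤ 1 - t),
          ENNReal.toReal_ofReal ht0, hμaint, hμbint, smul_eq_mul, smul_eq_mul]
      refine ⟨κ, by rw [hM]; exact ⟨hκp, hκm⟩, ?_⟩
      rw [hκint]
      have h3 : t * (sSup S - sInf S) = γ - sInf S := by
        rw [htdef]
        field_simp
      linarith
  have hIcc : S = Set.Icc (sInf S) (sSup S) := by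
    ext γ
    constructor
    · intro hγ
      exact ⟨csInf_le hbddB hγ, le_csSup hbddA hγ⟩
    · rintro ⟨h1, h2⟩
      exact hcombo γ h1 h2
  refine ⟨hReqS, sInf S, sSup S, csInf_le_csSup hSne hbddB hbddA, ?_⟩
  rw [hReqS]
  exact hIcc
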